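/- Let (X₁, X₂, X₃) ∈ ℝ³ with −1 < X₁ < 1, −1 < X₂ < 1 and Θ(X₁, X₂, X₃) < 0. Then there exist g₁, g₂ in SU(2) such that tr(g₁)/2 = X₁, tr(g₂)/2 = X₂ and tr(g₁g₂)/2 = X₃. (Thus the trace-coordinate map from SU(2)² onto the region I₃ is surjective.) -/
import Mathlib


open Matrix

/-- The trace-coordinate map from `SU(2)²` onto the region
`I₃ = {(X₁,X₂,X₃) ∈ (−1,1)³ : Θ < 0}` is surjective: every point of `I₃` with
`−1 < X₁, X₂ < 1` and `Θ(X₁,X₂,X₃) < 0` is realized by a pair of `SU(2)` elements. -/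
theorem su2_trace_coordinates_surjective_onto_I3
    (X₁ X₂ X₃ : ℝ) (h₁ : -1 < X₁) (h₁' : X₁ < 1) (h₂ : -1 < X₂) (h₂' : X₂ < 1)
    (hTheta : (X₃ - X₁ * X₂) ^ 2 - (X₁ ^ 2 - 1) * (X₂ ^ 2 - 1) < 0) :
    ∃ g₁ g₂ : Matrix.specialUnitaryGroup (Fin 2) ℂ,
      Matrix.trace ((g₁ : Matrix (Fin 2) (Fin 2) ℂ)) = 2 * (X₁ : ℂ) ∧
      Matrix.trace ((g₂ : Matrix (Fin 2) (Fin 2) ℂ)) = 2 * (X₂ : ℂ) ∧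
      Matrix.trace (((g₁ * g₂ : Matrix.specialUnitaryGroup (Fin 2) ℂ) :
        Matrix (Fin 2) (Fin 2) ℂ)) = 2 * (X₃ : ℂ) := by
  have hc1 : (0:ℝ) < 1 - X₁ ^ 2 := by nlinarith
  have hc2 : (0:ℝ) < 1 - X₂ ^ 2 := by nlinarith
  obtain ⟨s₁, hs₁pos, hs₁sq⟩ : ∃ s : ℝ, 0 < s ∧ s ^ 2 = 1 - X₁ ^ 2 :=
    ⟨Real.sqrt (1 - X₁ ^ 2), Real.sqrt_pos.mpr hc1, Real.sq_sqrt hc1.le⟩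
  obtain ⟨y, hy, hy2⟩ : ∃ y : ℝ, s₁ * y = X₁ * X₂ - X₃ ∧ y ^ 2 < 1 - X₂ ^ 2 := by
    refine ⟨(X₁ * X₂ - X₃) / s₁, by field_simp, ?_⟩
    rw [div_pow, hs₁sq, div_lt_iff₀ hc1]
    nlinarith
  obtain ⟨b, hbsq⟩ : ∃ b : ℝ, b ^ 2 = 1 - X₂ ^ 2 - y ^ 2 :=
    ⟨Real.sqrt (1 - X₂ ^ 2 - y ^ 2), Real.sq_sqrt (by linarith)⟩
  have key1 : (X₁:ℂ) ^ 2 + (s₁:ℂ) ^ 2 = 1 := by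
    have : (X₁ ^ 2 + s₁ ^ 2 : ℝ) = 1 := by rw [hs₁sq]; ring
    exact_mod_cast this
  have key2 : (X₂:ℂ) ^ 2 + (y:ℂ) ^ 2 + (b:ℂ) ^ 2 = 1 := by
    have : (X₂ ^ 2 + y ^ 2 + b ^ 2 : ℝ) = 1 := by rw [hbsq]; ring
    exact_mod_cast this
  have key3 : (s₁:ℂ) * (y:ℂ) = (X₁:ℂ) * X₂ - X₃ := by exact_mod_cast hy
  set A : Matrix (Fin 2) (Fin 2) ℂ :=
    !![(X₁:ℂ) + s₁ * Complex.I, 0; 0, (X₁:ℂ) - s₁ * Complex.I] with hA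
  set B : Matrix (Fin 2) (Fin 2) ℂ :=
    !![(X₂:ℂ) + y * Complex.I, (b:ℂ); -(b:ℂ), (X₂:ℂ) - y * Complex.I] with hB
  have hAstar : star A = !![(X₁:ℂ) - s₁ * Complex.I, 0; 0, (X₁:ℂ) + s₁ * Complex.I] := by
    rw [hA, star_eq_conjTranspose]
    ext i j
    fin_cases i <;> fin_cases j <;>
      simp [conjTranspose_apply, Complex.ext_iff]
  have hBstar : star B = !![(X₂:ℂ) - y * Complex.I, -(b:ℂ); (b:ℂ), (X₂:ℂ) + y * Complex.I] := by
    rw [hB, star_eq_conjTranspose]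
    ext i j
    fin_cases i <;> fin_cases j <;>
      simp [conjTranspose_apply, Complex.ext_iff]
  have hAmem : A ∈ Matrix.specialUnitaryGroup (Fin 2) ℂ := by
    rw [mem_specialUnitaryGroup_iff]
    refine ⟨?_, ?_⟩
    · rw [mem_unitaryGroup_iff, hAstar, hA]
      ext i j
      fin_cases i <;> fin_cases j <;>
        simp [Matrix.mul_apply, Fin.sum_univ_two, Matrix.one_apply] <;>
        ring_nf <;>
        simp only [Complex.I_sq] <;>
        (first
          | ring1
          | linear_combination key1)
    · rw [hA, Matrix.det_fin_two_of]
      linear_combination key1 - (s₁:ℂ)^2 * Complex.I_sq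
  have hBmem : B ∈ Matrix.specialUnitaryGroup (Fin 2) ℂ := by
    rw [mem_specialUnitaryGroup_iff]
    refine ⟨?_, ?_⟩
    · rw [mem_unitaryGroup_iff, hBstar, hB]
      ext i j
      fin_cases i <;> fin_cases j <;>
        simp [Matrix.mul_apply, Fin.sum_univ_two, Matrix.one_apply] <;>
        ring_nf <;>
        simp only [Complex.I_sq] <;>
        (first
          | ring1
          | linear_combination key2)
    · rw [hB, Matrix.det_fin_two_of]
      linear_combination key2 - (y:ℂ)^2 * Complex.I_sq
  refine ⟨⟨A, hAmem⟩, ⟨B, hBmem⟩, ?_, ?_, ?_⟩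
  · show Matrix.trace A = 2 * (X₁ : ℂ)
    rw [hA]
    simp [Matrix.trace_fin_two]
    ring
  · show Matrix.trace B = 2 * (X₂ : ℂ)
    rw [hB]
    simp [Matrix.trace_fin_two]
    ring
  · show Matrix.trace (A * B) = 2 * (X₃ : ℂ)
    rw [hA, hB]
    simp [Matrix.trace_fin_two, Matrix.mul_apply, Fin.sum_univ_two]
    linear_combination (2:ℂ) * key3 * Complex.I^2 + 2 * ((X₁:ℂ)*X₂ - X₃) * Complex.I_sq
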